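/- Let C be a balanced category with pullbacks, with binary coproducts all of whose coproduct cocones are stable under pullback, and with a strict initial object 0 (every morphism with codomain 0 is an isomorphism). Then binary coproducts in C are disjoint: for any objects X and Y, the pullback of the coproduct injections inl : X → X ⨿ Y and inr : Y → X ⨿ Y is an initial object. -/

import Mathlib

open CategoryTheory CategoryTheory.Limits

/-- In a balanced category with pullbacks, binary coproducts all of whose
coproduct cocones are stable under pullback, and a strict initial object (every morphism
into `⊥_ C` is an isomorphism), binary coproducts are disjoint: the pullback of the two
coproduct injections `coprod.inl : X ⟶ X ⨿ Y` and `coprod.inr : Y ⟶ X ⨿ Y` is an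
initial object. -/
theorem coprod_disjoint_of_balanced_stable {C : Type*} [Category C] [Balanced C]
    [HasPullbacks C] [HasBinaryCoproducts C] [HasInitial C]
    (hstable : ∀ {X Y S : C} (inl : X ⟶ S) (inr : Y ⟶ S),
      Nonempty (IsColimit (BinaryCofan.mk inl inr)) →
      ∀ {Z : C} (f : Z ⟶ S),
        Nonempty (IsColimit (BinaryCofan.mk (pullback.snd inl f) (pullback.snd inr f))))
    (hstrict : ∀ {A : C} (f : A ⟶ ⊥_ C), IsIso f)
    (X Y : C) :
    Nonempty (IsInitial (pullback (coprod.inl : X ⟶ X ⨿ Y) (coprod.inr : Y ⟶ X ⨿ Y))) := by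
  set L := pullback (coprod.inl : X ⟶ X ⨿ Y) (coprod.inr : Y ⟶ X ⨿ Y) with hL
  set k : L ⟶ X ⨿ Y := pullback.fst _ _ ≫ coprod.inl with hk
  obtain ⟨hc⟩ := hstable (coprod.inl : X ⟶ X ⨿ Y) coprod.inr ⟨coprodIsCoprod X Y⟩ k
  -- sections of the two pulled-back injections
  have hsA : (pullback.lift (pullback.fst _ _) (𝟙 L) (by simp [hk]) :
      L ⟶ pullback (coprod.inl : X ⟶ X ⨿ Y) k) ≫ pullback.snd _ _ = 𝟙 L :=
    pullback.lift_snd _ _ _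
  have hsB : (pullback.lift (pullback.snd _ _) (𝟙 L)
        (by simp [hk, ← pullback.condition]) :
      L ⟶ pullback (coprod.inr : Y ⟶ X ⨿ Y) k) ≫ pullback.snd _ _ = 𝟙 L :=
    pullback.lift_snd _ _ _
  set ι : ⊥_ C ⟶ L := initial.to L with hι
  have hepi : Epi ι := by
    constructor
    intro W g h _
    set m : L ⟶ W := hc.desc (BinaryCofan.mk (pullback.snd _ _ ≫ g) (pullback.snd _ _ ≫ h)) with hm
    have hαm : pullback.snd (coprod.inl : X ⟶ X ⨿ Y) k ≫ m = pullback.snd _ _ ≫ g :=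
      hc.fac _ ⟨WalkingPair.left⟩
    have hβm : pullback.snd (coprod.inr : Y ⟶ X ⨿ Y) k ≫ m = pullback.snd _ _ ≫ h :=
      hc.fac _ ⟨WalkingPair.right⟩
    calc g = pullback.lift (pullback.fst _ _) (𝟙 L) (by exact (Category.id_comp _).symm) ≫
            (pullback.snd (coprod.inl : X ⟶ X ⨿ Y) k ≫ g) := by
              rw [← Category.assoc, hsA, Category.id_comp]
      _ = pullback.lift (pullback.fst _ _) (𝟙 L) (by exact (Category.id_comp _).symm) ≫
            (pullback.snd (coprod.inl : X ⟶ X ⨿ Y) k ≫ m) := by rw [hαm]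
      _ = m := by rw [← Category.assoc, hsA, Category.id_comp]
      _ = pullback.lift (pullback.snd _ _) (𝟙 L) (by exact pullback.condition.symm.trans (Category.id_comp _).symm) ≫
            (pullback.snd (coprod.inr : Y ⟶ X ⨿ Y) k ≫ m) := by
              rw [← Category.assoc, hsB, Category.id_comp]
      _ = pullback.lift (pullback.snd _ _) (𝟙 L) (by exact pullback.condition.symm.trans (Category.id_comp _).symm) ≫
            (pullback.snd (coprod.inr : Y ⟶ X ⨿ Y) k ≫ h) := by rw [hβm]
      _ = h := by rw [← Category.assoc, hsB, Category.id_comp]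
  have hmono : Mono ι := by
    constructor
    intro Z u v _
    haveI := hstrict u
    haveI := hstrict v
    have : inv u = inv v := initial.hom_ext _ _
    exact IsIso.inv_eq_inv.mp this
  haveI := hepi
  haveI := hmono
  haveI : IsIso ι := isIso_of_mono_of_epi ι
  exact ⟨IsInitial.ofIso initialIsInitial (asIso ι)⟩
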